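/- For any complex z with |z| ≤ ρ and any α = n + (d−2)/2 with d ≥ 2 an integer and n ≥ 10(ρ+1)² an integer, the Bessel function of the first kind satisfies (1/2)·(|z|/2)^α/Γ(α+1) ≤ |J_α(z)| ≤ (3/2)·(|z|/2)^α/Γ(α+1). -/

import Mathlib

/-- The Bessel function of the first kind of order `α`,
`J_α(z) = Σ_{m≥0} (−1)^m (z/2)^{2m+α} / (Γ(m+1) Γ(m+α+1))`. -/
noncomputable def besselJ (α : ℝ) (z : ℂ) : ℂ :=
  ∑' m : ℕ, ((-1) ^ m / (Complex.Gamma (m + 1) * Complex.Gamma ((m : ℂ) + (α : ℂ) + 1)))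
      * (z / 2) ^ ((2 * m : ℕ) + (α : ℂ))

/-- Bessel estimate (5.15): for `|z| ≤ ρ`, `α = n + (d−2)/2`, `d ≥ 2`,
`n ≥ 10(ρ+1)²`, one has `(1/2)(|z|/2)^α/Γ(α+1) ≤ |J_α(z)| ≤ (3/2)(|z|/2)^α/Γ(α+1)`. -/
theorem stmt_4 (ρ : ℝ) (hρ : 0 < ρ) (d n : ℕ) (hd : 2 ≤ d)
    (hn : 10 * (ρ + 1) ^ 2 ≤ (n : ℝ)) (z : ℂ) (hz : ‖z‖ ≤ ρ)
    (α : ℝ) (hα : α = (n : ℝ) + ((d : ℝ) - 2) / 2) :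
    (1 / 2) * (‖z‖ / 2) ^ α / Real.Gamma (α + 1) ≤ ‖besselJ α z‖ ∧
      ‖besselJ α z‖ ≤ (3 / 2) * (‖z‖ / 2) ^ α / Real.Gamma (α + 1) := by
  have hρ1 : (0:ℝ) < (ρ+1)^2 := by positivity
  have hn10 : (10:ℝ) ≤ n := le_trans (by nlinarith) hn
  have hαn : (n:ℝ) ≤ α := by
    have h2d : (2:ℝ) ≤ d := by exact_mod_cast hd
    rw [hα]; linarith
  have hα10 : (10:ℝ) ≤ α := le_trans hn10 hαn
  have hαpos : (0:ℝ) < α := by linarith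
  have hΓpos : 0 < Real.Gamma (α+1) := Real.Gamma_pos_of_pos (by linarith)
  -- Gamma growth
  have hGam : ∀ m : ℕ, α ^ m * Real.Gamma (α+1) ≤ Real.Gamma (↑m + α + 1) := by
    intro m
    induction m with
    | zero => simp
    | succ m ih =>
      have hpos : (0:ℝ) < ↑m + α + 1 := by positivity
      have h1 : Real.Gamma (↑(m+1) + α + 1) = (↑m + α + 1) * Real.Gamma (↑m + α + 1) := by
        rw [show ((m+1 : ℕ):ℝ) + α + 1 = (↑m + α + 1) + 1 by push_cast; ring,
          Real.Gamma_add_one hpos.ne']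
      rw [h1, pow_succ]
      have hm0 : (0:ℝ) ≤ (m:ℝ) := Nat.cast_nonneg m
      calc α ^ m * α * Real.Gamma (α+1) = α * (α ^ m * Real.Gamma (α+1)) := by ring
        _ ≤ (↑m + α + 1) * Real.Gamma (↑m + α + 1) := by
            apply mul_le_mul (by linarith) ih (by positivity) (by linarith)
  by_cases hz0 : z = 0
  · subst hz0
    have hJ : besselJ α 0 = 0 := by
      have hterm : ∀ m : ℕ, ((-1:ℂ) ^ m / (Complex.Gamma (m + 1)
          * Complex.Gamma ((m : ℂ) + (α : ℂ) + 1))) * ((0:ℂ) / 2) ^ ((2 * m : ℕ) + (α : ℂ)) = 0 := by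
        intro m
        have hw : (((2*m:ℕ):ℂ) + (α:ℂ)) ≠ 0 := by
          rw [show (((2*m:ℕ):ℂ) + (α:ℂ)) = (((2*m:ℕ) + α : ℝ) : ℂ) by push_cast; ring,
            Ne, Complex.ofReal_eq_zero]
          positivity
        rw [zero_div, Complex.zero_cpow hw, mul_zero]
      have : besselJ α 0 = ∑' _ : ℕ, (0:ℂ) := tsum_congr hterm
      simpa using this
    rw [hJ]
    simp [Real.zero_rpow hαpos.ne']
  -- main case
  have hz2 : (z/2 : ℂ) ≠ 0 := div_ne_zero hz0 two_ne_zero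
  set c : ℂ := (z/2) ^ (α:ℂ) with hc
  set g : ℕ → ℂ := fun m => ((-1) ^ m / (Complex.Gamma (m + 1)
      * Complex.Gamma ((m : ℂ) + (α : ℂ) + 1))) * (z / 2) ^ (2 * m) with hg
  have hterm : ∀ m : ℕ, ((-1:ℂ) ^ m / (Complex.Gamma (m + 1)
      * Complex.Gamma ((m : ℂ) + (α : ℂ) + 1))) * (z / 2) ^ ((2 * m : ℕ) + (α : ℂ)) = g m * c := by
    intro m
    rw [Complex.cpow_add _ _ hz2, Complex.cpow_natCast, hg, hc]
    ring
  have hJ : besselJ α z = (∑' m, g m) * c := by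
    rw [show besselJ α z = ∑' m, g m * c from tsum_congr hterm, tsum_mul_right]
  have hGamC : ∀ m:ℕ, Complex.Gamma ((m:ℂ)+(α:ℂ)+1) = ((Real.Gamma (↑m+α+1) : ℝ) : ℂ) := by
    intro m
    rw [show ((m:ℂ)+(α:ℂ)+1) = (((m:ℝ)+α+1 : ℝ) : ℂ) by push_cast; ring, Complex.Gamma_ofReal]
  have hGamRpos : ∀ m:ℕ, 0 < Real.Gamma (↑m+α+1) := fun m => Real.Gamma_pos_of_pos (by positivity)
  have hnormg : ∀ m:ℕ, ‖g m‖ = (‖z‖/2)^(2*m) / (m.factorial * Real.Gamma (↑m + α + 1)) := by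
    intro m
    rw [hg]
    simp only [Complex.Gamma_nat_eq_factorial, hGamC]
    rw [norm_mul, norm_div, norm_pow, norm_pow, norm_neg, norm_one, one_pow, norm_mul,
      norm_div, Complex.norm_natCast, Complex.norm_real, Real.norm_eq_abs,
      abs_of_pos (hGamRpos m), show ‖(2:ℂ)‖ = 2 by norm_num]
    ring
  have hq : ρ^2/(4*α) ≤ 1/40 := by
    rw [div_le_div_iff₀ (by positivity) (by norm_num)]
    nlinarith
  have hbound : ∀ m:ℕ, ‖g m‖ ≤ ((1:ℝ)/40)^m / Real.Gamma (α+1) := by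
    intro m
    rw [hnormg m]
    have hfac1 : (1:ℝ) ≤ m.factorial := by exact_mod_cast m.factorial_pos
    calc (‖z‖/2)^(2*m) / (↑m.factorial * Real.Gamma (↑m+α+1))
        ≤ (ρ^2/4)^m / (α^m * Real.Gamma (α+1)) := by
          apply div_le_div₀ (by positivity) ?_ (by positivity) ?_
          · rw [pow_mul]
            apply pow_le_pow_left₀ (by positivity)
            nlinarith [norm_nonneg z]
          · calc α^m * Real.Gamma (α+1) ≤ Real.Gamma (↑m+α+1) := hGam m
              _ ≤ ↑m.factorial * Real.Gamma (↑m+α+1) :=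
                le_mul_of_one_le_left (hGamRpos m).le hfac1
      _ = (ρ^2/(4*α))^m / Real.Gamma (α+1) := by
          rw [div_pow, div_pow, mul_pow]; ring
      _ ≤ ((1:ℝ)/40)^m / Real.Gamma (α+1) := by
          gcongr
  have hsumB : Summable (fun m:ℕ => ((1:ℝ)/40)^m / Real.Gamma (α+1)) :=
    (summable_geometric_of_lt_one (by norm_num) (by norm_num)).div_const _
  have hsumg : Summable g := Summable.of_norm_bounded hsumB hbound
  have hg0 : g 0 = ((1 / Real.Gamma (α+1) : ℝ) : ℂ) := by
    rw [hg]
    simp only [pow_zero, Nat.cast_zero, mul_zero, zero_add]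
    rw [Complex.Gamma_one, one_mul,
      show ((α:ℂ)+1) = ((α+1 : ℝ) : ℂ) by push_cast; ring, Complex.Gamma_ofReal]
    push_cast
    ring
  have hng0 : ‖g 0‖ = 1 / Real.Gamma (α+1) := by
    rw [hg0, Complex.norm_real, Real.norm_eq_abs, abs_of_pos (by positivity)]
  have hgeo := (hasSum_geometric_of_lt_one (by norm_num : (0:ℝ) ≤ 1/40)
    (by norm_num)).mul_right ((1/40) / Real.Gamma (α+1))
  have hgeo' : HasSum (fun m:ℕ => ((1:ℝ)/40)^(m+1) / Real.Gamma (α+1))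
      ((1 - 1/40:ℝ)⁻¹ * (1/40 / Real.Gamma (α+1))) := by
    have e : (fun m:ℕ => ((1:ℝ)/40)^(m+1) / Real.Gamma (α+1))
        = fun i => (1/40:ℝ)^i * (1/40 / Real.Gamma (α+1)) := by
      funext m; rw [pow_succ]; ring
    rw [e]; exact hgeo
  have htail : ‖∑' m:ℕ, g (m+1)‖ ≤ (1/2) / Real.Gamma (α+1) := by
    have h1 := tsum_of_norm_bounded hgeo' (fun m => hbound (m+1))
    have h2 : (1 - 1/40:ℝ)⁻¹ * (1/40 / Real.Gamma (α+1)) ≤ (1/2) / Real.Gamma (α+1) := by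
      rw [div_eq_mul_inv (1/2:ℝ), div_eq_mul_inv (1/40:ℝ), ← mul_assoc]
      apply mul_le_mul_of_nonneg_right _ (inv_nonneg.mpr hΓpos.le)
      norm_num
    exact le_trans h1 h2
  have hsplit : ∑' m, g m = g 0 + ∑' m:ℕ, g (m+1) := Summable.tsum_eq_zero_add hsumg
  have hhalf : (1:ℝ)/Real.Gamma (α+1) = 2 * ((1/2)/Real.Gamma (α+1)) := by ring
  have hS_ub : ‖∑' m, g m‖ ≤ (3/2)/Real.Gamma (α+1) := by
    rw [hsplit]
    calc ‖g 0 + ∑' m:ℕ, g (m+1)‖ ≤ ‖g 0‖ + ‖∑' m:ℕ, g (m+1)‖ := norm_add_le _ _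
      _ ≤ 1/Real.Gamma (α+1) + (1/2)/Real.Gamma (α+1) := by
          rw [hng0]; exact (add_le_add_iff_left _).mpr htail
      _ = (3/2)/Real.Gamma (α+1) := by ring
  have hS_lb : (1/2)/Real.Gamma (α+1) ≤ ‖∑' m, g m‖ := by
    rw [hsplit]
    have h3 : ‖g 0‖ ≤ ‖g 0 + ∑' m:ℕ, g (m+1)‖ + ‖∑' m:ℕ, g (m+1)‖ := by
      calc ‖g 0‖ = ‖(g 0 + ∑' m:ℕ, g (m+1)) - ∑' m:ℕ, g (m+1)‖ := by
            congr 1; ring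
        _ ≤ ‖g 0 + ∑' m:ℕ, g (m+1)‖ + ‖∑' m:ℕ, g (m+1)‖ := norm_sub_le _ _
    rw [hng0] at h3
    linarith
  have hnormc : ‖c‖ = (‖z‖/2)^α := by
    rw [hc, Complex.norm_cpow_real]
    congr 1
    rw [norm_div]; norm_num
  have hpow : (0:ℝ) ≤ (‖z‖/2)^α := Real.rpow_nonneg (by positivity) α
  rw [hJ, norm_mul, hnormc]
  constructor
  · calc (1/2) * (‖z‖/2)^α / Real.Gamma (α+1)
        = ((1/2)/Real.Gamma (α+1)) * (‖z‖/2)^α := by ring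
      _ ≤ ‖∑' m, g m‖ * (‖z‖/2)^α := mul_le_mul_of_nonneg_right hS_lb hpow
  · calc ‖∑' m, g m‖ * (‖z‖/2)^α ≤ ((3/2)/Real.Gamma (α+1)) * (‖z‖/2)^α :=
        mul_le_mul_of_nonneg_right hS_ub hpow
      _ = (3/2) * (‖z‖/2)^α / Real.Gamma (α+1) := by ring
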